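/- Let y : [0,∞) → ℝ be differentiable and let α : ℝ → ℝ be locally Lipschitz, strictly increasing, with α(0) = 0. If y'(t) ≥ -α(y(t)) for all t ≥ 0 and y(0) ≥ 0, then y(t) ≥ 0 for all t ≥ 0. -/
import Mathlib


/-- Scalar CBF comparison lemma: if `y` is differentiable on `[0,∞)`,
`α` is locally Lipschitz, strictly increasing with `α 0 = 0`,
`y' t ≥ -α (y t)` for all `t ≥ 0`, and `y 0 ≥ 0`, then `y t ≥ 0` for all `t ≥ 0`. -/
theorem cbf_forward_invariance_scalar
    (y : ℝ → ℝ) (α : ℝ → ℝ)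
    (hy : ∀ t, 0 ≤ t → DifferentiableAt ℝ y t)
    (hα_lip : LocallyLipschitz α)
    (hα_mono : StrictMono α)
    (hα_zero : α 0 = 0)
    (hineq : ∀ t, 0 ≤ t → -α (y t) ≤ deriv y t)
    (hy0 : 0 ≤ y 0) :
    ∀ t, 0 ≤ t → 0 ≤ y t := by
  intro t ht
  by_contra hneg
  push_neg at hneg
  have hcontIcc : ContinuousOn y (Set.Icc 0 t) := fun u hu =>
    (hy u hu.1).continuousAt.continuousWithinAt
  set A : Set ℝ := Set.Icc 0 t ∩ y ⁻¹' Set.Ici 0 with hA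
  have hAne : A.Nonempty := ⟨0, ⟨le_refl 0, ht⟩, hy0⟩
  have hAbdd : BddAbove A := ⟨t, fun u hu => hu.1.2⟩
  have hAclosed : IsClosed A :=
    hcontIcc.preimage_isClosed_of_isClosed isClosed_Icc isClosed_Ici
  set s := sSup A with hs
  have hsA : s ∈ A := hAclosed.csSup_mem hAne hAbdd
  have hys : 0 ≤ y s := hsA.2
  have hs0 : 0 ≤ s := hsA.1.1
  have hst : s ≤ t := hsA.1.2
  have hslt : s < t := hst.lt_of_ne fun heq => absurd hys (by rw [heq]; linarith)
  have hyneg : ∀ u ∈ Set.Ioo s t, y u < 0 := by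
    intro u hu
    by_contra hle
    push_neg at hle
    have : u ∈ A := ⟨⟨le_trans hs0 hu.1.le, hu.2.le⟩, hle⟩
    exact absurd (le_csSup hAbdd this) (not_le.mpr hu.1)
  have hmono : StrictMonoOn y (Set.Icc s t) := by
    apply strictMonoOn_of_deriv_pos (convex_Icc s t)
    · exact hcontIcc.mono (Set.Icc_subset_Icc_left hs0)
    · intro u hu
      rw [interior_Icc] at hu
      have hu0 : (0 : ℝ) ≤ u := le_trans hs0 hu.1.le
      have : α (y u) < 0 := hα_zero ▸ hα_mono (hyneg u hu)
      have := hineq u hu0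
      linarith
  have := hmono ⟨le_refl s, hst⟩ ⟨hst, le_refl t⟩ hslt
  linarith
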